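/- Let n ≥ 2, s > 0, H > 0, a, b > 0. The function K ↦ L(s,H,K) = a·s^{n−1}·((n−1)H²/s² + K²)^{n/2} + b·H^{n−1}·((n−1)s²/H² + 1/K²)^{n/2}·K is strictly convex on (0,∞). -/

import Mathlib

open Set

/-- `K ↦ A * (c + K^2) ^ p` is strictly convex on `(0,∞)` for `A, c > 0`, `p ≥ 1`. -/
lemma aux_strict (A c p : ℝ) (hA : 0 < A) (hc : 0 < c) (hp : 1 ≤ p) :
    StrictConvexOn ℝ (Set.Ioi (0 : ℝ)) (fun K : ℝ => A * (c + K ^ 2) ^ p) := by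
  refine ⟨convex_Ioi 0, ?_⟩
  intro x hx y hy hxy t u ht hu htu
  simp only [smul_eq_mul]
  have hx0 : (0:ℝ) ≤ x := le_of_lt hx
  have hy0 : (0:ℝ) ≤ y := le_of_lt hy
  have hsq : (t * x + u * y) ^ 2 < t * x ^ 2 + u * y ^ 2 := by
    have := (strictConvexOn_pow (le_refl 2)).2 (mem_Ici.2 hx0) (mem_Ici.2 hy0) hxy ht hu htu
    simpa using this
  have h1 : (0:ℝ) ≤ c + (t * x + u * y) ^ 2 := by positivity
  have h2 : (c + (t * x + u * y) ^ 2) ^ p < (t * (c + x ^ 2) + u * (c + y ^ 2)) ^ p := by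
    apply Real.rpow_lt_rpow h1 _ (lt_of_lt_of_le one_pos hp)
    nlinarith
  have h3 : (t * (c + x ^ 2) + u * (c + y ^ 2)) ^ p
      ≤ t * (c + x ^ 2) ^ p + u * (c + y ^ 2) ^ p := by
    have := (convexOn_rpow hp).2 (mem_Ici.2 (by positivity : (0:ℝ) ≤ c + x ^ 2))
      (mem_Ici.2 (by positivity : (0:ℝ) ≤ c + y ^ 2)) ht.le hu.le htu
    simpa using this
  calc A * (c + (t * x + u * y) ^ 2) ^ p
      < A * (t * (c + x ^ 2) ^ p + u * (c + y ^ 2) ^ p) := by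
        exact mul_lt_mul_of_pos_left (lt_of_lt_of_le h2 h3) hA
    _ = t * (A * (c + x ^ 2) ^ p) + u * (A * (c + y ^ 2) ^ p) := by ring

/-- The "perspective" of a convex function on `(0,∞)` is convex on `(0,∞)`. -/
lemma aux_persp (φ : ℝ → ℝ) (hφ : ConvexOn ℝ (Set.Ioi (0 : ℝ)) φ) :
    ConvexOn ℝ (Set.Ioi (0 : ℝ)) (fun K : ℝ => K * φ K⁻¹) := by
  refine ⟨convex_Ioi 0, ?_⟩
  intro x hx y hy t u ht hu htu
  simp only [smul_eq_mul]
  rcases eq_or_lt_of_le ht with rfl | ht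
  · have hu1 : u = 1 := by linarith
    simp [hu1]
  rcases eq_or_lt_of_le hu with rfl | hu
  · have ht1 : t = 1 := by linarith
    simp [ht1]
  have hx0 : (0:ℝ) < x := hx
  have hy0 : (0:ℝ) < y := hy
  set z : ℝ := t * x + u * y with hz
  have hz0 : 0 < z := by positivity
  have ha' : 0 ≤ t * x / z := by positivity
  have hb' : 0 ≤ u * y / z := by positivity
  have hab' : t * x / z + u * y / z = 1 := by field_simp; exact hz.symm
  have hmix : (t * x / z) * x⁻¹ + (u * y / z) * y⁻¹ = z⁻¹ := by
    have e1 : (t * x / z) * x⁻¹ = t / z := by field_simp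
    have e2 : (u * y / z) * y⁻¹ = u / z := by field_simp
    rw [e1, e2, ← add_div, htu, one_div]
  have := hφ.2 (mem_Ioi.2 (inv_pos.2 hx0)) (mem_Ioi.2 (inv_pos.2 hy0)) ha' hb' hab'
  simp only [smul_eq_mul, hmix] at this
  have h2 : z * φ z⁻¹ ≤ z * ((t * x / z) * φ x⁻¹ + (u * y / z) * φ y⁻¹) :=
    mul_le_mul_of_nonneg_left this hz0.le
  calc z * φ z⁻¹ ≤ z * ((t * x / z) * φ x⁻¹ + (u * y / z) * φ y⁻¹) := h2
    _ = t * (x * φ x⁻¹) + u * (y * φ y⁻¹) := by field_simp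

/-- The total-energy integrand `K ↦ L(s,H,K)` is strictly convex on `(0,∞)`. -/
theorem strictConvexOn_L (n : ℕ) (hn : 2 ≤ n) (s H a b : ℝ)
    (hs : 0 < s) (hH : 0 < H) (ha : 0 < a) (hb : 0 < b) :
    StrictConvexOn ℝ (Set.Ioi (0 : ℝ)) (fun K : ℝ =>
      a * s ^ (n - 1) * (((n : ℝ) - 1) * H ^ 2 / s ^ 2 + K ^ 2) ^ ((n : ℝ) / 2)
        + b * H ^ (n - 1) * (((n : ℝ) - 1) * s ^ 2 / H ^ 2 + (K ^ 2)⁻¹) ^ ((n : ℝ) / 2) * K) := by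
  have hn1 : (0:ℝ) < (n : ℝ) - 1 := by
    have : (2:ℝ) ≤ (n : ℝ) := by exact_mod_cast hn
    linarith
  have hp : (1:ℝ) ≤ (n : ℝ) / 2 := by
    have : (2:ℝ) ≤ (n : ℝ) := by exact_mod_cast hn
    linarith
  have hc : (0:ℝ) < ((n : ℝ) - 1) * H ^ 2 / s ^ 2 := by positivity
  have hd : (0:ℝ) < ((n : ℝ) - 1) * s ^ 2 / H ^ 2 := by positivity
  have hA : (0:ℝ) < a * s ^ (n - 1) := by positivity
  have hB : (0:ℝ) ≤ b * H ^ (n - 1) := by positivity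
  have hf := aux_strict (a * s ^ (n - 1)) (((n : ℝ) - 1) * H ^ 2 / s ^ 2) ((n : ℝ) / 2) hA hc hp
  have hφ : ConvexOn ℝ (Set.Ioi (0 : ℝ))
      (fun u : ℝ => (((n : ℝ) - 1) * s ^ 2 / H ^ 2 + u ^ 2) ^ ((n : ℝ) / 2)) := by
    have := (aux_strict 1 (((n : ℝ) - 1) * s ^ 2 / H ^ 2) ((n : ℝ) / 2) one_pos hd hp).convexOn
    simpa using this
  have hg := (aux_persp _ hφ).smul hB
  have hsum := hf.add_convexOn hg
  have heq : (fun K : ℝ =>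
      a * s ^ (n - 1) * (((n : ℝ) - 1) * H ^ 2 / s ^ 2 + K ^ 2) ^ ((n : ℝ) / 2)
        + b * H ^ (n - 1) * (((n : ℝ) - 1) * s ^ 2 / H ^ 2 + (K ^ 2)⁻¹) ^ ((n : ℝ) / 2) * K)
      = ((fun K : ℝ => a * s ^ (n - 1) * (((n : ℝ) - 1) * H ^ 2 / s ^ 2 + K ^ 2) ^ ((n : ℝ) / 2))
        + fun x : ℝ => (b * H ^ (n - 1)) •
          (x * (((n : ℝ) - 1) * s ^ 2 / H ^ 2 + x⁻¹ ^ 2) ^ ((n : ℝ) / 2))) := by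
    funext K
    simp only [Pi.add_apply, smul_eq_mul, inv_pow]
    ring
  exact heq ▸ hsum
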